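/- Bihari's inequality: let f : [0,∞) → (0,∞) be continuous and nondecreasing, let h : [t₀, t₀+T] → [0,∞) be integrable, and let x : [t₀, t₀+T] → [0,∞) be continuous. Suppose x(t) ≤ α + ∫_{t₀}^t h(s) f(x(s)) ds for all t ∈ [t₀, t₀+T], where α > 0. Define G(u) = ∫_{α}^u dr / f(r). If G(α) + ∫_{t₀}^t h(s) ds lies in the range of G for all t, then x(t) ≤ G⁻¹(G(α) + ∫_{t₀}^t h(s) ds). -/

import Mathlib

open MeasureTheory

/-- Bihari's inequality. -/
theorem stmt_2 (t₀ T α : ℝ) (hT : 0 ≤ T) (hα : 0 < α)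
    (f : ℝ → ℝ) (hf_cont : ContinuousOn f (Set.Ici 0))
    (hf_mono : MonotoneOn f (Set.Ici 0))
    (hf_pos : ∀ u, 0 ≤ u → 0 < f u)
    (h : ℝ → ℝ) (hh_nonneg : ∀ s, 0 ≤ h s)
    (hh_int : IntegrableOn h (Set.Icc t₀ (t₀ + T)))
    (x : ℝ → ℝ) (hx_cont : ContinuousOn x (Set.Icc t₀ (t₀ + T)))
    (hx_nonneg : ∀ t, 0 ≤ x t)
    (hineq : ∀ t ∈ Set.Icc t₀ (t₀ + T), x t ≤ α + ∫ s in t₀..t, h s * f (x s))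
    (G : ℝ → ℝ) (hG : ∀ u, G u = ∫ r in α..u, 1 / f r)
    (hrange : ∀ t ∈ Set.Icc t₀ (t₀ + T),
      ∃ u, 0 ≤ u ∧ G u = G α + ∫ s in t₀..t, h s) :
    ∀ t ∈ Set.Icc t₀ (t₀ + T), ∀ u, 0 ≤ u →
      G u = G α + ∫ s in t₀..t, h s → x t ≤ u := by
  intro t ht u hu hGu
  obtain ⟨ht0, htT⟩ := ht
  have hfα : 0 < f α := hf_pos α hα.le
  -- Basic facts about G
  have hGα : G α = 0 := by rw [hG]; exact intervalIntegral.integral_same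
  have hinv_cont : ContinuousOn (fun r => 1 / f r) (Set.Ici 0) :=
    continuousOn_const.div hf_cont (fun r hr => (hf_pos r hr).ne')
  have hinv_intble : ∀ a b : ℝ, 0 ≤ a → 0 ≤ b →
      IntervalIntegrable (fun r => 1 / f r) volume a b := by
    intro a b ha hb
    apply (hinv_cont.mono ?_).intervalIntegrable
    intro r hr
    rw [Set.mem_uIcc] at hr
    rcases hr with ⟨h1, _⟩ | ⟨h1, _⟩
    · exact le_trans ha h1
    · exact le_trans hb h1
  have hGdiff : ∀ a b : ℝ, 0 ≤ a → 0 ≤ b → G b - G a = ∫ r in a..b, 1 / f r := by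
    intro a b ha hb
    have := intervalIntegral.integral_add_adjacent_intervals
      (hinv_intble α a hα.le ha) (hinv_intble a b ha hb)
    rw [hG, hG]; linarith
  have hGmono_le : ∀ a b : ℝ, 0 ≤ a → a ≤ b → G a ≤ G b := by
    intro a b ha hab
    have h1 := hGdiff a b ha (ha.trans hab)
    have h2 : 0 ≤ ∫ r in a..b, 1 / f r :=
      intervalIntegral.integral_nonneg hab
        (fun r hr => le_of_lt (by have := hf_pos r (ha.trans hr.1); positivity))
    linarith
  have hGmono_lt : ∀ a b : ℝ, 0 ≤ a → a < b → G a < G b := by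
    intro a b ha hab
    have h1 := hGdiff a b ha (ha.trans hab.le)
    have h2 : 0 < ∫ r in a..b, 1 / f r := by
      apply intervalIntegral.intervalIntegral_pos_of_pos_on
        (hinv_intble a b ha (ha.trans hab.le))
        (fun r hr => by have := hf_pos r (ha.trans hr.1.le); positivity) hab
    linarith
  -- Integrability facts
  have hfx_cont : ContinuousOn (fun s => f (x s)) (Set.Icc t₀ (t₀ + T)) :=
    hf_cont.comp hx_cont (fun s _ => hx_nonneg s)
  have hIne : (t₀ : ℝ) ∈ Set.Icc t₀ (t₀ + T) := ⟨le_rfl, by linarith⟩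
  obtain ⟨z, hz, hzmax⟩ := isCompact_Icc.exists_isMaxOn ⟨t₀, hIne⟩ hfx_cont
  rw [isMaxOn_iff] at hzmax
  have hfx_int : IntegrableOn (fun s => h s * f (x s)) (Set.Icc t₀ (t₀ + T)) := by
    have hmeas : AEStronglyMeasurable (fun s => f (x s))
        (volume.restrict (Set.Icc t₀ (t₀ + T))) :=
      hfx_cont.aestronglyMeasurable measurableSet_Icc
    have hbd : ∀ᵐ s ∂(volume.restrict (Set.Icc t₀ (t₀ + T))), ‖f (x s)‖ ≤ f (x z) := by
      rw [ae_restrict_iff' measurableSet_Icc]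
      refine ae_of_all _ (fun s hs => ?_)
      rw [Real.norm_eq_abs, abs_of_pos (hf_pos _ (hx_nonneg s))]
      exact hzmax s hs
    have := Integrable.mul_bdd hh_int hmeas hbd
    exact this
  have hfx_intble : ∀ a b : ℝ, a ∈ Set.Icc t₀ (t₀ + T) → b ∈ Set.Icc t₀ (t₀ + T) →
      IntervalIntegrable (fun s => h s * f (x s)) volume a b := by
    intro a b ha hb
    exact (hfx_int.mono_set (Set.uIcc_subset_Icc ha hb)).intervalIntegrable
  have hh_intble : ∀ a b : ℝ, a ∈ Set.Icc t₀ (t₀ + T) → b ∈ Set.Icc t₀ (t₀ + T) →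
      IntervalIntegrable h volume a b := by
    intro a b ha hb
    exact (hh_int.mono_set (Set.uIcc_subset_Icc ha hb)).intervalIntegrable
  -- The majorant y
  set y : ℝ → ℝ := fun r => α + ∫ s in t₀..r, h s * f (x s) with hy_def
  have hy_sub : ∀ a b : ℝ, a ∈ Set.Icc t₀ (t₀ + T) → b ∈ Set.Icc t₀ (t₀ + T) →
      y b - y a = ∫ s in a..b, h s * f (x s) := by
    intro a b ha hb
    have := intervalIntegral.integral_add_adjacent_intervals
      (hfx_intble t₀ a hIne ha) (hfx_intble a b ha hb)
    simp only [hy_def]; linarith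
  have hy_mono : ∀ a b : ℝ, a ∈ Set.Icc t₀ (t₀ + T) → b ∈ Set.Icc t₀ (t₀ + T) →
      a ≤ b → y a ≤ y b := by
    intro a b ha hb hab
    have h1 := hy_sub a b ha hb
    have h2 : 0 ≤ ∫ s in a..b, h s * f (x s) :=
      intervalIntegral.integral_nonneg hab
        (fun s _ => mul_nonneg (hh_nonneg s) (hf_pos _ (hx_nonneg s)).le)
    linarith
  have hyα : ∀ r ∈ Set.Icc t₀ (t₀ + T), α ≤ y r := by
    intro r hr
    have h1 : y t₀ = α := by simp [hy_def]
    have := hy_mono t₀ r hIne hr hr.1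
    linarith
  have hy_pos : ∀ r ∈ Set.Icc t₀ (t₀ + T), (0:ℝ) ≤ y r :=
    fun r hr => le_trans hα.le (hyα r hr)
  have hxy : ∀ r ∈ Set.Icc t₀ (t₀ + T), x r ≤ y r := fun r hr => hineq r hr
  have hy_cont : ContinuousOn y (Set.Icc t₀ (t₀ + T)) := by
    apply continuousOn_const.add
    have : Set.uIcc t₀ (t₀ + T) = Set.Icc t₀ (t₀ + T) := Set.uIcc_of_le (by linarith)
    rw [← this] at hfx_int ⊢
    exact intervalIntegral.continuousOn_primitive_interval hfx_int
  have hfy_cont : ContinuousOn (fun r => f (y r)) (Set.Icc t₀ (t₀ + T)) :=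
    hf_cont.comp hy_cont (fun r hr => hy_pos r hr)
  have hUC := isCompact_Icc.uniformContinuousOn_of_continuous hfy_cont
  -- the integral of h
  set cI : ℝ := ∫ s in t₀..t, h s with hcI_def
  have htI : t ∈ Set.Icc t₀ (t₀ + T) := ⟨ht0, htT⟩
  have hcI_nonneg : 0 ≤ cI :=
    intervalIntegral.integral_nonneg ht0 (fun s _ => hh_nonneg s)
  -- Key estimate
  have key : ∀ ε : ℝ, 0 < ε → G (y t) ≤ (1 + ε) * cI := by
    intro ε hε
    obtain ⟨δ, hδ, hδ'⟩ := Metric.uniformContinuousOn_iff.1 hUC (ε * f α)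
      (mul_pos hε hfα)
    -- step estimate
    have hstep : ∀ a b : ℝ, t₀ ≤ a → a ≤ b → b ≤ t → b - a < δ →
        G (y b) - G (y a) ≤ (1 + ε) * ∫ r in a..b, h r := by
      intro a b ha hab hbt hd
      have haI : a ∈ Set.Icc t₀ (t₀ + T) := ⟨ha, by linarith⟩
      have hbI : b ∈ Set.Icc t₀ (t₀ + T) := ⟨by linarith, by linarith⟩
      have hya : α ≤ y a := hyα a haI
      have hyb : α ≤ y b := hyα b hbI
      have hyab : y a ≤ y b := hy_mono a b haI hbI hab
      have hya0 : (0:ℝ) ≤ y a := le_trans hα.le hya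
      have hyb0 : (0:ℝ) ≤ y b := le_trans hα.le hyb
      have hfya : 0 < f (y a) := hf_pos _ hya0
      have hfyb : 0 < f (y b) := hf_pos _ hyb0
      set d : ℝ := ∫ r in a..b, h r with hd_def
      have hd_nonneg : 0 ≤ d :=
        intervalIntegral.integral_nonneg hab (fun r _ => hh_nonneg r)
      have h1 : G (y b) - G (y a) = ∫ r in (y a)..(y b), 1 / f r :=
        hGdiff (y a) (y b) hya0 hyb0
      have h2 : (∫ r in (y a)..(y b), 1 / f r) ≤ ∫ r in (y a)..(y b), 1 / f (y a) := by
        apply intervalIntegral.integral_mono_on hyab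
          (hinv_intble (y a) (y b) hya0 hyb0) intervalIntegrable_const
        intro r hr
        exact one_div_le_one_div_of_le hfya (hf_mono hya0 (hya0.trans hr.1) hr.1)
      have h3 : (∫ r in (y a)..(y b), 1 / f (y a)) = (y b - y a) * (1 / f (y a)) := by
        rw [intervalIntegral.integral_const, smul_eq_mul]
      have h4 : y b - y a = ∫ r in a..b, h r * f (x r) := hy_sub a b haI hbI
      have h5 : (∫ r in a..b, h r * f (x r)) ≤ ∫ r in a..b, h r * f (y b) := by
        apply intervalIntegral.integral_mono_on hab (hfx_intble a b haI hbI)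
          ((hh_intble a b haI hbI).mul_const _)
        intro r hr
        have hrI : r ∈ Set.Icc t₀ (t₀ + T) := ⟨le_trans ha hr.1, le_trans hr.2 hbI.2⟩
        have hxyb : x r ≤ y b := le_trans (hxy r hrI) (hy_mono r b hrI hbI hr.2)
        exact mul_le_mul_of_nonneg_left (hf_mono (hx_nonneg r) hyb0 hxyb) (hh_nonneg r)
      have h6 : (∫ r in a..b, h r * f (y b)) = d * f (y b) := by
        rw [hd_def, ← intervalIntegral.integral_mul_const]
      have h7 : f (y b) ≤ (1 + ε) * f (y a) := by
        have hdist : dist b a < δ := by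
          rw [Real.dist_eq, abs_of_nonneg (by linarith : (0:ℝ) ≤ b - a)]; exact hd
        have := hδ' b hbI a haI hdist
        rw [Real.dist_eq] at this
        have habs : f (y b) - f (y a) < ε * f α := lt_of_abs_lt this
        have hfαa : f α ≤ f (y a) := hf_mono hα.le hya0 hya
        nlinarith
      -- combine
      have e1 : G (y b) - G (y a) ≤ (y b - y a) * (1 / f (y a)) := by
        rw [h1]; linarith
      have e2 : y b - y a ≤ d * f (y b) := by rw [h4]; linarith
      have e3 : (y b - y a) * (1 / f (y a)) ≤ (d * f (y b)) * (1 / f (y a)) :=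
        mul_le_mul_of_nonneg_right e2 (by positivity)
      have e4 : (d * f (y b)) * (1 / f (y a)) ≤ (d * ((1 + ε) * f (y a))) * (1 / f (y a)) :=
        mul_le_mul_of_nonneg_right (mul_le_mul_of_nonneg_left h7 hd_nonneg) (by positivity)
      have e5 : (d * ((1 + ε) * f (y a))) * (1 / f (y a)) = (1 + ε) * d := by
        field_simp
      linarith
    -- partition
    obtain ⟨n, hn⟩ := exists_nat_gt ((t - t₀) / δ)
    set m : ℕ := n + 1 with hm_def
    have hm_pos : (0:ℝ) < (m:ℝ) := by positivity
    have hm : (t - t₀) / δ < (m:ℝ) := lt_of_lt_of_le hn (by exact_mod_cast Nat.le_succ n)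
    set c : ℝ := (t - t₀) / m with hc_def
    have hc_nonneg : 0 ≤ c := div_nonneg (by linarith) hm_pos.le
    have hc_lt : c < δ := by
      rw [hc_def, div_lt_iff₀ hm_pos]
      calc t - t₀ = (t - t₀) / δ * δ := by field_simp
        _ < (m:ℝ) * δ := by exact mul_lt_mul_of_pos_right hm hδ
        _ = δ * m := by ring
    set s : ℕ → ℝ := fun i => t₀ + i * c with hs_def
    have hs0 : s 0 = t₀ := by simp [hs_def]
    have hsm : s m = t := by
      simp only [hs_def, hc_def]
      field_simp
      ring
    have hs_mem : ∀ i : ℕ, i ≤ m → s i ∈ Set.Icc t₀ t := by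
      intro i hi
      constructor
      · simp only [hs_def]; nlinarith [mul_nonneg (Nat.cast_nonneg i : (0:ℝ) ≤ i) hc_nonneg]
      · have : (i:ℝ) * c ≤ (m:ℝ) * c :=
          mul_le_mul_of_nonneg_right (by exact_mod_cast hi) hc_nonneg
        have hmc : (m:ℝ) * c = t - t₀ := by rw [hc_def]; field_simp
        simp only [hs_def]; linarith
    have hs_step : ∀ i : ℕ, s (i + 1) - s i = c := by
      intro i; simp only [hs_def]; push_cast; ring
    have htel : (∑ i ∈ Finset.range m, (G (y (s (i + 1))) - G (y (s i))))
        = G (y t) - G (y t₀) := by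
      rw [Finset.sum_range_sub (fun i => G (y (s i))), hs0, hsm]
    have hmemI : ∀ i : ℕ, i ≤ m → s i ∈ Set.Icc t₀ (t₀ + T) := by
      intro i hi
      obtain ⟨h1, h2⟩ := hs_mem i hi
      exact ⟨h1, le_trans h2 htT⟩
    have hsum : (∑ i ∈ Finset.range m, ∫ r in s i..s (i + 1), h r) = cI := by
      rw [intervalIntegral.sum_integral_adjacent_intervals
        (fun k hk => hh_intble (s k) (s (k + 1)) (hmemI k hk.le) (hmemI (k + 1) hk)),
        hs0, hsm]
    have hbound : ∀ i ∈ Finset.range m,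
        G (y (s (i + 1))) - G (y (s i)) ≤ (1 + ε) * ∫ r in s i..s (i + 1), h r := by
      intro i hi
      rw [Finset.mem_range] at hi
      have hi1 : i + 1 ≤ m := hi
      have hmem1 := hs_mem i hi.le
      have hmem2 := hs_mem (i + 1) hi1
      apply hstep _ _ hmem1.1 ?_ hmem2.2 ?_
      · rw [show s (i+1) = s i + c by linarith [hs_step i]]; linarith
      · rw [hs_step i]; exact hc_lt
    have hyt0 : y t₀ = α := by simp [hy_def]
    calc G (y t) = ∑ i ∈ Finset.range m, (G (y (s (i + 1))) - G (y (s i))) := by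
          rw [htel, hyt0, hGα]; ring
      _ ≤ ∑ i ∈ Finset.range m, (1 + ε) * ∫ r in s i..s (i + 1), h r :=
          Finset.sum_le_sum hbound
      _ = (1 + ε) * cI := by rw [← Finset.mul_sum, hsum]
  -- conclude G (y t) ≤ cI
  have hGyt : G (y t) ≤ cI := by
    refine le_of_forall_pos_le_add (fun ε hε => ?_)
    have hk := key (ε / (cI + 1)) (by positivity)
    have h' : ε / (cI + 1) * cI ≤ ε := by
      rw [div_mul_eq_mul_div, div_le_iff₀ (by positivity)]
      nlinarith
    nlinarith
  -- finish
  have hGxt : G (x t) ≤ cI :=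
    le_trans (hGmono_le (x t) (y t) (hx_nonneg t) (hxy t htI)) hGyt
  have hGu' : G u = cI := by rw [hGu, hGα]; ring
  by_contra hlt
  push_neg at hlt
  have := hGmono_lt u (x t) hu hlt
  linarith
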